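/- Let c : ℝⁿ → ℝ be continuously differentiable with the property |c(x') - c(x) - ⟨∇c(x), x' - x⟩| ≤ (H/2)‖x' - x‖² for all x, x'. Then for any x, d ∈ ℝⁿ and α ∈ [0,1], |c(x + αd)| ≤ (1-α)|c(x)| + α|c(x) + ⟨∇c(x), d⟩| + (α²H/2)‖d‖². -/

import Mathlib

open RealInnerProductSpace

theorem stmt_1 {n : ℕ} (c : EuclideanSpace ℝ (Fin n) → ℝ) (H : ℝ) (hH : 0 ≤ H)
    (hdiff : Differentiable ℝ c)
    (hquad : ∀ x x' : EuclideanSpace ℝ (Fin n),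
      |c x' - c x - ⟪gradient c x, x' - x⟫| ≤ H / 2 * ‖x' - x‖ ^ 2)
    (x d : EuclideanSpace ℝ (Fin n)) (α : ℝ) (hα : α ∈ Set.Icc (0 : ℝ) 1) :
    |c (x + α • d)| ≤ (1 - α) * |c x| + α * |c x + ⟪gradient c x, d⟫|
      + α ^ 2 * H / 2 * ‖d‖ ^ 2 := by
  obtain ⟨h0, h1⟩ := hα
  have hq := hquad x (x + α • d)
  rw [add_sub_cancel_left, inner_smul_right, norm_smul] at hq
  have key : |c (x + α • d)| ≤ |c x + α * ⟪gradient c x, d⟫| + H / 2 * (α ^ 2 * ‖d‖ ^ 2) := by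
    have := abs_add_le (c (x + α • d) - c x - α * ⟪gradient c x, d⟫) (c x + α * ⟪gradient c x, d⟫)
    have e : c (x + α • d) - c x - α * ⟪gradient c x, d⟫ + (c x + α * ⟪gradient c x, d⟫) = c (x + α • d) := by ring
    rw [e] at this
    calc |c (x + α • d)| ≤ |c (x + α • d) - c x - α * ⟪gradient c x, d⟫|
          + |c x + α * ⟪gradient c x, d⟫| := this
      _ ≤ H / 2 * (α ^ 2 * ‖d‖ ^ 2) + |c x + α * ⟪gradient c x, d⟫| := by
          refine add_le_add ?_ le_rfl
          calc |c (x + α • d) - c x - α * ⟪gradient c x, d⟫| ≤ H / 2 * (‖α‖ * ‖d‖) ^ 2 := hq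
            _ = H / 2 * (α ^ 2 * ‖d‖ ^ 2) := by
                rw [Real.norm_eq_abs, mul_pow, sq_abs]
      _ = |c x + α * ⟪gradient c x, d⟫| + H / 2 * (α ^ 2 * ‖d‖ ^ 2) := by ring
  have hconv : |c x + α * ⟪gradient c x, d⟫| ≤
      (1 - α) * |c x| + α * |c x + ⟪gradient c x, d⟫| := by
    have : c x + α * ⟪gradient c x, d⟫
        = (1 - α) * c x + α * (c x + ⟪gradient c x, d⟫) := by ring
    rw [this]
    calc |(1 - α) * c x + α * (c x + ⟪gradient c x, d⟫)|
        ≤ |(1 - α) * c x| + |α * (c x + ⟪gradient c x, d⟫)| := abs_add_le _ _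
      _ = (1 - α) * |c x| + α * |c x + ⟪gradient c x, d⟫| := by
          rw [abs_mul, abs_mul, abs_of_nonneg (by linarith), abs_of_nonneg h0]
  calc |c (x + α • d)| ≤ |c x + α * ⟪gradient c x, d⟫| + H / 2 * (α ^ 2 * ‖d‖ ^ 2) := key
    _ ≤ (1 - α) * |c x| + α * |c x + ⟪gradient c x, d⟫| + α ^ 2 * H / 2 * ‖d‖ ^ 2 := by
        linarith [hconv]
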